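/- Let (μ₁,...,μ_r) be an Angelesco system with supp μ_j ⊆ Γ_j, the intervals Γ_j pairwise intersecting in at most one point. Then for every multi-index n = (n₁,...,n_r), the type II polynomial P_n has exactly n_j simple zeros in the interior of Γ_j for each j, and these account for all |n| zeros of P_n. -/

import Mathlib

open Polynomial MeasureTheory
open scoped Classical

/-- The (topological) support of a measure on `ℝ`. -/
def msupp (μ : Measure ℝ) : Set ℝ := {x | ∀ U ∈ nhds x, μ U ≠ 0}

lemma msupp_compl_null (μ : Measure ℝ) : μ (msupp μ)ᶜ = 0 := by
  have h : ∀ x : {y : ℝ // y ∈ (msupp μ)ᶜ}, ∃ U : Set ℝ, IsOpen U ∧ (x : ℝ) ∈ U ∧ μ U = 0 := by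
    rintro ⟨x, hx⟩
    simp only [msupp, Set.mem_compl_iff, Set.mem_setOf_eq, not_forall] at hx
    obtain ⟨U, hU, hU0⟩ := hx
    exact ⟨interior U, isOpen_interior, mem_interior_iff_mem_nhds.2 hU,
      measure_mono_null interior_subset (not_not.1 hU0)⟩
  choose V hVo hVx hV0 using h
  obtain ⟨T, hTc, hTeq⟩ := TopologicalSpace.isOpen_iUnion_countable V hVo
  have hsub : (msupp μ)ᶜ ⊆ ⋃ i ∈ T, V i := by
    rw [hTeq]; intro x hx; exact Set.mem_iUnion.2 ⟨⟨x, hx⟩, hVx _⟩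
  exact measure_mono_null hsub ((measure_biUnion_null_iff hTc).2 fun i _ => hV0 i)

lemma integrable_polyEval (μ : Measure ℝ) (hmom : ∀ k : ℕ, Integrable (fun x : ℝ => x ^ k) μ)
    (f : Polynomial ℝ) : Integrable (fun x => f.eval x) μ := by
  have h : (fun x : ℝ => f.eval x) =
      fun x => ∑ k ∈ Finset.range (f.natDegree + 1), f.coeff k * x ^ k :=
    funext fun x => eval_eq_sum_range x
  rw [h]
  exact integrable_finset_sum _ fun k _ => (hmom k).const_mul _

lemma evenMult_nonneg_mul : ∀ N : ℕ, ∀ f : Polynomial ℝ, f.natDegree ≤ N → f ≠ 0 →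
    ∀ I : Set ℝ, I.OrdConnected → (∀ x ∈ I, Even (rootMultiplicity x f)) →
    ∀ a ∈ I, ∀ b ∈ I, 0 ≤ f.eval a * f.eval b := by
  intro N
  induction N with
  | zero =>
    intro f hdeg hf I hI hev a ha b hb
    obtain ⟨c, rfl⟩ := Polynomial.natDegree_eq_zero.1 (Nat.le_zero.1 hdeg)
    simpa using mul_self_nonneg c
  | succ N ih =>
    intro f hdeg hf I hI hev a ha b hb
    by_cases hroot : ∃ c ∈ I, f.eval c = 0
    · obtain ⟨c, hcI, hc⟩ := hroot
      set m := rootMultiplicity c f with hm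
      have hmpos : 0 < m := (rootMultiplicity_pos hf).2 hc
      have hmeven : Even m := hev c hcI
      set g := f /ₘ (X - C c) ^ m with hg
      have hfg : (X - C c) ^ m * g = f := pow_mul_divByMonic_rootMultiplicity_eq f c
      have hgne : g ≠ 0 := fun h => hf (by rw [← hfg, h, mul_zero])
      have hgc : g.eval c ≠ 0 := eval_divByMonic_pow_rootMultiplicity_ne_zero c hf
      have hdegg : g.natDegree + m = f.natDegree := by
        have h1 := natDegree_mul (pow_ne_zero m (X_sub_C_ne_zero c)) hgne
        rw [hfg, natDegree_pow, natDegree_X_sub_C, mul_one] at h1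
        omega
      have hm2 : 2 ≤ m := by
        obtain ⟨t, ht⟩ := hmeven; omega
      have hgev : ∀ x ∈ I, Even (rootMultiplicity x g) := by
        intro x hx
        by_cases hxc : x = c
        · subst hxc
          rw [rootMultiplicity_eq_zero hgc]
          exact Even.zero
        · have hmul := rootMultiplicity_mul (p := (X - C c) ^ m) (q := g) (x := x)
            (by rw [hfg]; exact hf)
          have h1 : rootMultiplicity x ((X - C c) ^ m) = 0 := by
            apply rootMultiplicity_eq_zero
            simp [IsRoot, sub_eq_zero, hxc]
          rw [hfg, h1, zero_add] at hmul
          rw [← hmul]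
          exact hev x hx
      have hIH := ih g (by omega) hgne I hI hgev a ha b hb
      have hcalc : f.eval a * f.eval b =
          ((a - c) ^ m * (b - c) ^ m) * (g.eval a * g.eval b) := by
        rw [← hfg]; simp [eval_mul, eval_pow]; ring
      rw [hcalc]
      exact mul_nonneg (mul_nonneg (hmeven.pow_nonneg _) (hmeven.pow_nonneg _)) hIH
    · push_neg at hroot
      by_contra hneg
      push_neg at hneg
      have h0 : (0 : ℝ) ∈ Set.uIcc (f.eval a) (f.eval b) := by
        rcases mul_neg_iff.1 hneg with ⟨h1, h2⟩ | ⟨h1, h2⟩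
        · exact Set.mem_uIcc.2 (Or.inr ⟨le_of_lt h2, le_of_lt h1⟩)
        · exact Set.mem_uIcc.2 (Or.inl ⟨le_of_lt h1, le_of_lt h2⟩)
      obtain ⟨c, hcmem, hc0⟩ := intermediate_value_uIcc
        ((Polynomial.continuous f).continuousOn) h0
      exact hroot c (hI.uIcc_subset ha hb hcmem) hc0

lemma closure_pairs {f : ℝ → ℝ} (hf : Continuous f) {I : Set ℝ}
    (h : ∀ a ∈ I, ∀ b ∈ I, 0 ≤ f a * f b) :
    ∀ a ∈ closure I, ∀ b ∈ closure I, 0 ≤ f a * f b := by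
  have step1 : ∀ a ∈ I, ∀ b ∈ closure I, 0 ≤ f a * f b := by
    intro a ha b hb
    have hcl : IsClosed {x : ℝ | 0 ≤ f a * f x} :=
      isClosed_le continuous_const (continuous_const.mul hf)
    exact closure_minimal (fun x hx => h a ha x hx) hcl hb
  intro a ha b hb
  have hcl : IsClosed {x : ℝ | 0 ≤ f x * f b} :=
    isClosed_le continuous_const (hf.mul continuous_const)
  exact closure_minimal (fun x hx => step1 x hx b hb) hcl ha

lemma ordConnected_subset_closure_interior {s : Set ℝ} (hs : s.OrdConnected) {a b : ℝ}
    (ha : a ∈ s) (hb : b ∈ s) (hab : a < b) : s ⊆ closure (interior s) := by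
  intro x hx
  rcases lt_or_ge x b with h | h
  · have h1 : Set.Ioo x b ⊆ s := fun y hy =>
      hs.out hx hb ⟨le_of_lt hy.1, le_of_lt hy.2⟩
    have h2 : Set.Ioo x b ⊆ interior s := interior_maximal h1 isOpen_Ioo
    have hx' : x ∈ closure (Set.Ioo x b) := by
      rw [closure_Ioo (ne_of_lt h)]; exact ⟨le_refl _, le_of_lt h⟩
    exact closure_mono h2 hx'
  · have hax : a < x := lt_of_lt_of_le hab h
    have h1 : Set.Ioo a x ⊆ s := fun y hy =>
      hs.out ha hx ⟨le_of_lt hy.1, le_of_lt hy.2⟩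
    have h2 : Set.Ioo a x ⊆ interior s := interior_maximal h1 isOpen_Ioo
    have hx' : x ∈ closure (Set.Ioo a x) := by
      rw [closure_Ioo (ne_of_lt hax)]; exact ⟨le_of_lt hax, le_refl _⟩
    exact closure_mono h2 hx'

lemma open_subsingleton_empty {U : Set ℝ} (hU : IsOpen U) (h : U.Subsingleton) : U = ∅ := by
  by_contra h'
  obtain ⟨x, hx⟩ := Set.nonempty_iff_ne_empty.2 h'
  obtain ⟨ε, hε, hball⟩ := Metric.isOpen_iff.1 hU x hx
  have hy : x + ε / 2 ∈ Metric.ball x ε := by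
    rw [Metric.mem_ball, Real.dist_eq, show x + ε / 2 - x = ε / 2 by ring,
      abs_of_pos (by linarith)]
    linarith
  have := h (hball hy) hx
  linarith [this]

lemma integral_poly_pos (μ : Measure ℝ) [IsFiniteMeasure μ] (f : Polynomial ℝ)
    (hmom : ∀ k : ℕ, Integrable (fun x : ℝ => x ^ k) μ)
    (h0 : ∀ x ∈ msupp μ, 0 ≤ f.eval x) {x₀ : ℝ} (hx₀ : x₀ ∈ msupp μ)
    (hf0 : 0 < f.eval x₀) : 0 < ∫ x, f.eval x ∂μ := by
  have hmem : msupp μ ∈ ae μ := by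
    rw [mem_ae_iff]; exact msupp_compl_null μ
  have hae : 0 ≤ᵐ[μ] fun x => f.eval x :=
    Filter.eventually_of_mem hmem h0
  rw [integral_pos_iff_support_of_nonneg_ae hae (integrable_polyEval μ hmom f)]
  have hVopen : IsOpen (Function.support fun x : ℝ => f.eval x) := by
    have : (Function.support fun x : ℝ => f.eval x) = (fun x : ℝ => f.eval x) ⁻¹' {0}ᶜ := by
      ext x; simp [Function.mem_support]
    rw [this]
    exact (isOpen_compl_singleton).preimage (Polynomial.continuous f)
  have hx₀V : x₀ ∈ Function.support fun x : ℝ => f.eval x := by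
    simp [Function.mem_support]; exact ne_of_gt hf0
  have := hx₀ _ (hVopen.mem_nhds hx₀V)
  exact lt_of_le_of_ne zero_le (Ne.symm this)

theorem stmt13 (r : ℕ) (μ : Fin r → Measure ℝ) [∀ j, IsFiniteMeasure (μ j)]
    (Γ : Fin r → Set ℝ) (hconn : ∀ j, (Γ j).OrdConnected)
    (hsupp : ∀ j, msupp (μ j) ⊆ Γ j) (hinf : ∀ j, (msupp (μ j)).Infinite)
    (hmom : ∀ j, ∀ k : ℕ, Integrable (fun x : ℝ => x ^ k) (μ j))
    (hdisj : ∀ i j, i ≠ j → (Γ i ∩ Γ j).Subsingleton)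
    (n : Fin r → ℕ) (P : Polynomial ℝ) (hPm : P.Monic) (hPdeg : P.natDegree = ∑ j, n j)
    (horth : ∀ j, ∀ k < n j, ∫ x : ℝ, P.eval x * x ^ k ∂(μ j) = 0) :
    Multiset.card P.roots = ∑ j, n j ∧ P.roots.Nodup ∧
      ∀ j, Multiset.card (P.roots.filter (fun t => t ∈ interior (Γ j))) = n j := by
  have hPne : P ≠ 0 := hPm.ne_zero
  set S : Finset ℝ := P.roots.toFinset with hS
  set A : Fin r → Finset ℝ := fun j => S.filter (fun t => t ∈ interior (Γ j)) with hA
  -- the key sign-change bound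
  have key : ∀ j, n j ≤ (A j).card := by
    intro j
    by_contra hlt
    push_neg at hlt
    set T : Finset ℝ := S.filter (fun x => x ∈ interior (Γ j) ∧ Odd (rootMultiplicity x P))
      with hT
    have hTA : T ⊆ A j := fun x hx => Finset.mem_filter.2
      ⟨(Finset.mem_filter.1 hx).1, (Finset.mem_filter.1 hx).2.1⟩
    have hTcard : T.card < n j := lt_of_le_of_lt (Finset.card_le_card hTA) hlt
    set Q : Polynomial ℝ := ∏ x ∈ T, (X - C x) with hQ
    have hQne : Q ≠ 0 := Finset.prod_ne_zero_iff.2 fun x _ => X_sub_C_ne_zero x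
    have hQdeg : Q.natDegree = T.card := by
      rw [hQ, natDegree_prod _ _ (fun x _ => X_sub_C_ne_zero x)]
      simp [natDegree_X_sub_C]
    set f := P * Q with hf
    have hfne : f ≠ 0 := mul_ne_zero hPne hQne
    have hev : ∀ x ∈ interior (Γ j), Even (rootMultiplicity x f) := by
      intro x hx
      have hmul : rootMultiplicity x f = rootMultiplicity x P + rootMultiplicity x Q :=
        rootMultiplicity_mul hfne
      have hQmult : rootMultiplicity x Q = if x ∈ T then 1 else 0 := by
        rw [← count_roots, hQ, roots_prod_X_sub_C]
        split_ifs with h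
        · exact Multiset.count_eq_one_of_mem T.nodup h
        · exact Multiset.count_eq_zero_of_notMem h
      by_cases hxT : x ∈ T
      · rw [hmul, hQmult, if_pos hxT]
        exact ((Finset.mem_filter.1 hxT).2.2).add_one
      · rw [hmul, hQmult, if_neg hxT, add_zero]
        rcases Nat.even_or_odd (rootMultiplicity x P) with h | h
        · exact h
        · exfalso
          apply hxT
          have hroot : P.IsRoot x := (rootMultiplicity_pos hPne).1 h.pos
          refine Finset.mem_filter.2 ⟨?_, hx, h⟩
          rw [hS, Multiset.mem_toFinset, mem_roots hPne]
          exact hroot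
    have hns : ∀ a ∈ interior (Γ j), ∀ b ∈ interior (Γ j), 0 ≤ f.eval a * f.eval b :=
      evenMult_nonneg_mul f.natDegree f le_rfl hfne _ (hconn j).interior hev
    have hcls : ∀ a ∈ closure (interior (Γ j)), ∀ b ∈ closure (interior (Γ j)),
        0 ≤ f.eval a * f.eval b := closure_pairs (Polynomial.continuous f) hns
    obtain ⟨a, ha, b, hb, hab⟩ := (hinf j).nontrivial
    have hmsub : msupp (μ j) ⊆ closure (interior (Γ j)) := by
      rcases hab.lt_or_gt with h | h
      · exact fun x hx => ordConnected_subset_closure_interior (hconn j) (hsupp j ha)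
          (hsupp j hb) h (hsupp j hx)
      · exact fun x hx => ordConnected_subset_closure_interior (hconn j) (hsupp j hb)
          (hsupp j ha) h (hsupp j hx)
    have hzfin : {x : ℝ | f.IsRoot x}.Finite := finite_setOf_isRoot hfne
    obtain ⟨x₀, hx₀m, hx₀⟩ : ∃ x₀ ∈ msupp (μ j), f.eval x₀ ≠ 0 := by
      obtain ⟨x₀, hx₀m, hx₀⟩ := ((hinf j).diff hzfin).nonempty
      exact ⟨x₀, hx₀m, hx₀⟩
    set c : ℝ := if 0 < f.eval x₀ then 1 else -1 with hcdef
    have hx₀cl := hmsub hx₀m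
    have hposall : ∀ x ∈ msupp (μ j), 0 ≤ (C c * f).eval x := by
      intro x hx
      have h := hcls _ hx₀cl _ (hmsub hx)
      rw [eval_mul, eval_C]
      by_cases hc : 0 < f.eval x₀
      · rw [hcdef, if_pos hc, one_mul]
        nlinarith
      · have hneg' : f.eval x₀ < 0 := lt_of_le_of_ne (not_lt.1 hc) hx₀
        rw [hcdef, if_neg hc]
        nlinarith
    have hx₀pos : 0 < (C c * f).eval x₀ := by
      rw [eval_mul, eval_C]
      by_cases hc : 0 < f.eval x₀
      · rw [hcdef, if_pos hc, one_mul]; exact hc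
      · rw [hcdef, if_neg hc]
        have : f.eval x₀ < 0 := lt_of_le_of_ne (not_lt.1 hc) hx₀
        linarith
    have hint := integral_poly_pos (μ j) (C c * f) (hmom j) hposall hx₀m hx₀pos
    have hterm : ∀ k : ℕ, Integrable (fun x : ℝ => P.eval x * x ^ k) (μ j) := by
      intro k
      have := integrable_polyEval (μ j) (hmom j) (P * X ^ k)
      simpa [eval_mul, eval_pow] using this
    have heval : ∀ x : ℝ, (C c * f).eval x =
        ∑ k ∈ Finset.range (Q.natDegree + 1), (c * Q.coeff k) * (P.eval x * x ^ k) := by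
      intro x
      have h1 : Q.eval x = ∑ k ∈ Finset.range (Q.natDegree + 1), Q.coeff k * x ^ k :=
        eval_eq_sum_range x
      rw [eval_mul, eval_C, hf, eval_mul, h1]
      rw [Finset.mul_sum, Finset.mul_sum]
      exact Finset.sum_congr rfl fun k _ => by ring
    have hzero : ∫ x, (C c * f).eval x ∂(μ j) = 0 := by
      simp_rw [heval]
      rw [integral_finset_sum _ (fun k _ => ((hterm k).const_mul _))]
      refine Finset.sum_eq_zero fun k hk => ?_
      have hk' : k < n j := by
        have := Finset.mem_range.1 hk
        omega
      rw [integral_const_mul, horth j k hk', mul_zero]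
    rw [hzero] at hint
    exact lt_irrefl 0 hint
  -- disjointness of the A j
  have hAdisj : ∀ i j : Fin r, i ≠ j → Disjoint (A i) (A j) := by
    intro i j hij
    rw [Finset.disjoint_left]
    intro x hxi hxj
    have h1 : x ∈ interior (Γ i) := (Finset.mem_filter.1 hxi).2
    have h2 : x ∈ interior (Γ j) := (Finset.mem_filter.1 hxj).2
    have hsub : interior (Γ i) ∩ interior (Γ j) ⊆ Γ i ∩ Γ j :=
      Set.inter_subset_inter interior_subset interior_subset
    have hempty : interior (Γ i) ∩ interior (Γ j) = ∅ :=
      open_subsingleton_empty (isOpen_interior.inter isOpen_interior)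
        ((hdisj i j hij).anti hsub)
    exact absurd (Set.mem_inter h1 h2) (by rw [hempty]; exact Set.notMem_empty x)
  have hsum1 : ∑ j, (A j).card ≤ S.card := by
    rw [← Finset.card_biUnion (fun i _ j _ hij => hAdisj i j hij)]
    exact Finset.card_le_card (Finset.biUnion_subset.2 fun j _ => Finset.filter_subset _ _)
  have hS2 : S.card ≤ Multiset.card P.roots := Multiset.toFinset_card_le _
  have hchain : ∑ j, n j ≤ ∑ j, (A j).card := Finset.sum_le_sum fun j _ => key j
  have hroots_le : Multiset.card P.roots ≤ ∑ j, n j := hPdeg ▸ P.card_roots'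
  have heq1 : Multiset.card P.roots = ∑ j, n j := le_antisymm hroots_le (by
    calc ∑ j, n j ≤ ∑ j, (A j).card := hchain
      _ ≤ S.card := hsum1
      _ ≤ Multiset.card P.roots := hS2)
  have heqS : S.card = Multiset.card P.roots := le_antisymm hS2 (by
    calc Multiset.card P.roots = ∑ j, n j := heq1
      _ ≤ ∑ j, (A j).card := hchain
      _ ≤ S.card := hsum1)
  have hnodup : P.roots.Nodup := Multiset.toFinset_card_eq_card_iff_nodup.1 heqS
  have hsumeq : ∑ j, (A j).card = ∑ j, n j := le_antisymm
    (by calc ∑ j, (A j).card ≤ S.card := hsum1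
          _ ≤ Multiset.card P.roots := hS2
          _ = ∑ j, n j := heq1) hchain
  have hAcard : ∀ j, (A j).card = n j := by
    intro j
    have := (Finset.sum_eq_sum_iff_of_le (fun i _ => key i)).1 hsumeq.symm
    exact (this j (Finset.mem_univ j)).symm
  refine ⟨heq1, hnodup, fun j => ?_⟩
  have h1 : (P.roots.filter (fun t => t ∈ interior (Γ j))).toFinset =
      S.filter (fun t => t ∈ interior (Γ j)) := Multiset.toFinset_filter _ _
  have h2 : Multiset.card (P.roots.filter (fun t => t ∈ interior (Γ j))) =
      (P.roots.filter (fun t => t ∈ interior (Γ j))).toFinset.card :=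
    (Multiset.toFinset_card_eq_card_iff_nodup.2 (hnodup.filter _)).symm
  rw [h2, h1]
  exact hAcard j
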